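/- Let τ ⊆ {1,…,n} be a subset such that rank(A_τ) = d and A_τ is pointed (there exists c₀ ∈ ℝ^d with ⟨c₀, a_j⟩ > 0 for all j ∈ τ). Let w₀ ∈ ℝ^τ be such that T_{w₀} is a regular triangulation of A_τ. Then there exists w ∈ ℝ^n such that T_w is a regular triangulation of A and every facet of T_{w₀} is a facet of T_w. -/

import Mathlib

set_option linter.unusedSectionVars false

section General

variable {ι : Type*} [Fintype ι] [DecidableEq ι] {E : Type*} [NormedAddCommGroup E]
  [NormedSpace ℝ E] [FiniteDimensional ℝ E]

/-- finite conical combinations over a finset -/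
def coneI (v : ι → E) (t : Finset ι) : Set E :=
  {x | ∃ lam : ι → ℝ, (∀ j, 0 ≤ lam j) ∧ x = ∑ j ∈ t, lam j • v j}

lemma zero_mem_coneI (v : ι → E) (t : Finset ι) : (0 : E) ∈ coneI v t :=
  ⟨0, fun _ => le_rfl, by simp⟩

lemma coneI_mono (v : ι → E) {s t : Finset ι} (h : s ⊆ t) : coneI v s ⊆ coneI v t := by
  rintro x ⟨lam, hlam, rfl⟩
  refine ⟨fun j => if j ∈ s then lam j else 0, ?_, ?_⟩
  · intro j; by_cases hj : j ∈ s <;> simp [hj, hlam j]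
  · rw [← Finset.sum_subset h (fun j _ hj => by simp [hj])]
    exact Finset.sum_congr rfl fun j hj => by simp [hj]

lemma smul_mem_coneI {v : ι → E} {t : Finset ι} {x : E} (hx : x ∈ coneI v t) {c : ℝ}
    (hc : 0 ≤ c) : c • x ∈ coneI v t := by
  obtain ⟨lam, hlam, rfl⟩ := hx
  exact ⟨fun j => c * lam j, fun j => mul_nonneg hc (hlam j), by
    rw [Finset.smul_sum]; exact Finset.sum_congr rfl fun j _ => by simp [smul_smul]⟩

lemma add_mem_coneI {v : ι → E} {t : Finset ι} {x y : E} (hx : x ∈ coneI v t)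
    (hy : y ∈ coneI v t) : x + y ∈ coneI v t := by
  obtain ⟨lam, hlam, rfl⟩ := hx
  obtain ⟨mu, hmu, rfl⟩ := hy
  exact ⟨fun j => lam j + mu j, fun j => add_nonneg (hlam j) (hmu j), by
    rw [← Finset.sum_add_distrib]; exact Finset.sum_congr rfl fun j _ => by rw [add_smul]⟩

lemma convex_coneI (v : ι → E) (t : Finset ι) : Convex ℝ (coneI v t) := by
  intro x hx y hy a b ha hb _
  exact add_mem_coneI (smul_mem_coneI hx ha) (smul_mem_coneI hy hb)

lemma mem_coneI_of_mem {v : ι → E} {t : Finset ι} {j : ι} (hj : j ∈ t) : v j ∈ coneI v t := by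
  refine ⟨fun k => if k = j then 1 else 0, fun k => by positivity, ?_⟩
  rw [Finset.sum_eq_single j (fun k _ hk => by simp [hk]) (fun h => absurd hj h)]
  simp

/-- Carathéodory for cones: one can pass to a linearly independent subfamily. -/
lemma coneI_caratheodory (v : ι → E) (t : Finset ι) {x : E} (hx : x ∈ coneI v t) :
    ∃ s ⊆ t, (LinearIndependent ℝ (fun j : {j // j ∈ s} => v j)) ∧ x ∈ coneI v s := by
  classical
  induction t using Finset.strongInduction with
  | _ t ih =>
    by_cases hind : LinearIndependent ℝ (fun j : {j // j ∈ t} => v j)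
    · exact ⟨t, le_refl _, hind, hx⟩
    · obtain ⟨g, hg0, i₀, hgi₀⟩ := Fintype.not_linearIndependent_iff.1 hind
      obtain ⟨lam, hlam, rfl⟩ := hx
      -- extend g to ι by zero, with sign chosen so some coefficient is negative
      have hmain : ∀ nu : ι → ℝ, (∀ j ∉ t, nu j = 0) → (∑ j ∈ t, nu j • v j = 0) →
          (∃ j ∈ t, nu j < 0) →
          ∃ s ⊆ t, (LinearIndependent ℝ (fun j : {j // j ∈ s} => v j)) ∧
            (∑ j ∈ t, lam j • v j) ∈ coneI v s := by
        intro nu hnu0 hnusum ⟨j₁, hj₁t, hj₁⟩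
        set T : Finset ι := t.filter (fun j => nu j < 0) with hT
        have hTne : T.Nonempty := ⟨j₁, Finset.mem_filter.2 ⟨hj₁t, hj₁⟩⟩
        obtain ⟨j₀, hj₀T, hj₀min⟩ := T.exists_min_image (fun j => lam j / (-nu j)) hTne
        have hj₀t : j₀ ∈ t := (Finset.mem_filter.1 hj₀T).1
        have hj₀neg : nu j₀ < 0 := (Finset.mem_filter.1 hj₀T).2
        set c : ℝ := lam j₀ / (-nu j₀) with hc
        have hcnn : 0 ≤ c := div_nonneg (hlam j₀) (by linarith)
        set mu : ι → ℝ := fun j => lam j + c * nu j with hmu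
        have hmunn : ∀ j, 0 ≤ mu j := by
          intro j
          by_cases hjt : j ∈ t
          · rcases le_or_gt 0 (nu j) with h | h
            · have := hlam j; have : 0 ≤ c * nu j := mul_nonneg hcnn h; simp [hmu]; linarith [hlam j]
            · have hjT : j ∈ T := Finset.mem_filter.2 ⟨hjt, h⟩
              have hnj : 0 < -nu j := by linarith
              have hcle : c * (-nu j) ≤ lam j := (le_div_iff₀ hnj).mp (hj₀min j hjT)
              simp only [hmu]; nlinarith
          · simp [hmu, hnu0 j hjt, hlam j]
        have hmuj₀ : mu j₀ = 0 := by
          have hne : nu j₀ ≠ 0 := hj₀neg.ne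
          have hcn : c * nu j₀ = -lam j₀ := by
            rw [hc, div_mul_eq_mul_div, div_eq_iff (neg_ne_zero.mpr hne)]; ring
          simp only [hmu]; linarith
        have hsum : ∑ j ∈ t, lam j • v j = ∑ j ∈ t, mu j • v j := by
          rw [show (∑ j ∈ t, mu j • v j) = ∑ j ∈ t, lam j • v j + c • ∑ j ∈ t, nu j • v j by
            rw [Finset.smul_sum, ← Finset.sum_add_distrib]
            exact Finset.sum_congr rfl fun j _ => by
              simp [hmu, add_smul, smul_smul]]
          rw [hnusum, smul_zero, add_zero]
        have hx' : (∑ j ∈ t, lam j • v j) ∈ coneI v (t.erase j₀) := by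
          refine ⟨mu, hmunn, ?_⟩
          rw [hsum, ← Finset.add_sum_erase _ _ hj₀t, hmuj₀, zero_smul, zero_add]
        obtain ⟨s, hst, hsind, hxs⟩ := ih (t.erase j₀) (Finset.erase_ssubset hj₀t) hx'
        exact ⟨s, hst.trans (Finset.erase_subset _ _), hsind, hxs⟩
      set nu : ι → ℝ := fun j => if h : j ∈ t then g ⟨j, h⟩ else 0 with hnu
      have hnuout : ∀ j ∉ t, nu j = 0 := fun j hj => by simp [hnu, hj]
      have hnusum : ∑ j ∈ t, nu j • v j = 0 := by
        rw [← hg0, ← Finset.sum_attach t (fun j => nu j • v j)]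
        exact Finset.sum_congr rfl fun j _ => by simp [hnu, j.2]
      have hnusum' : ∑ j ∈ t, (-nu) j • v j = 0 := by
        have : ∑ j ∈ t, (-nu) j • v j = -∑ j ∈ t, nu j • v j := by
          rw [← Finset.sum_neg_distrib]
          exact Finset.sum_congr rfl fun j _ => by simp
        rw [this, hnusum, neg_zero]
      rcases lt_trichotomy (g i₀) 0 with h | h | h
      · exact hmain nu hnuout hnusum ⟨i₀, i₀.2, by simp [hnu, i₀.2]; exact h⟩
      · exact absurd h hgi₀
      · refine hmain (-nu) (fun j hj => by simp [hnuout j hj]) hnusum'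
          ⟨i₀, i₀.2, by simp [hnu, i₀.2]; exact h⟩

lemma isClosed_coneI_of_linIndep {v : ι → E} {t : Finset ι}
    (h : LinearIndependent ℝ (fun j : {j // j ∈ t} => v j)) : IsClosed (coneI v t) := by
  classical
  set T : ({j // j ∈ t} → ℝ) →ₗ[ℝ] E :=
    { toFun := fun mu => ∑ j : {j // j ∈ t}, mu j • v j,
      map_add' := by intro a b; simp [add_smul, Finset.sum_add_distrib],
      map_smul' := by intro c a; simp [smul_smul, Finset.smul_sum] } with hT
  have hinj : Function.Injective T := by
    rw [← LinearMap.ker_eq_bot]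
    apply (Submodule.eq_bot_iff _).2
    intro mu hmu
    have hz : ∀ j, mu j = 0 := Fintype.linearIndependent_iff.1 h mu hmu
    funext j; exact hz j
  have hemb := T.isClosedEmbedding_of_injective (LinearMap.ker_eq_bot.2 hinj)
  have horth : IsClosed {mu : {j // j ∈ t} → ℝ | ∀ j, 0 ≤ mu j} := by
    have : {mu : {j // j ∈ t} → ℝ | ∀ j, 0 ≤ mu j} = ⋂ j, {mu | 0 ≤ mu j} := by
      ext; simp [Set.mem_iInter]
    rw [this]
    exact isClosed_iInter fun j => isClosed_le continuous_const (continuous_apply j)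
  have himg : coneI v t = T '' {mu | ∀ j, 0 ≤ mu j} := by
    ext x; constructor
    · rintro ⟨lam, hlam, rfl⟩
      refine ⟨fun j => lam j.1, fun j => hlam j.1, ?_⟩
      show ∑ j : {j // j ∈ t}, lam j.1 • v j.1 = _
      rw [Finset.sum_coe_sort t (fun j => lam j • v j)]
    · rintro ⟨mu, hmu, rfl⟩
      refine ⟨fun j => if h : j ∈ t then mu ⟨j, h⟩ else 0, ?_, ?_⟩
      · intro j; by_cases h : j ∈ t <;> simp [h]; exact hmu _
      · show _ = ∑ j ∈ t, (if h : j ∈ t then mu ⟨j, h⟩ else 0) • v j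
        rw [← Finset.sum_coe_sort t (fun j => (if h : j ∈ t then mu ⟨j, h⟩ else 0) • v j)]
        show ∑ j : {j // j ∈ t}, mu j • v j.1 = _
        exact Finset.sum_congr rfl fun j _ => by rw [dif_pos j.2]
  rw [himg]
  exact hemb.isClosedMap _ horth

lemma isClosed_coneI (v : ι → E) (t : Finset ι) : IsClosed (coneI v t) := by
  classical
  have hrw : coneI v t = ⋃ s ∈ {s : Finset ι |
      s ⊆ t ∧ LinearIndependent ℝ (fun j : {j // j ∈ s} => v j)}, coneI v s := by
    ext x; constructor
    · intro hx
      obtain ⟨s, hst, hind, hxs⟩ := coneI_caratheodory v t hx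
      exact Set.mem_biUnion ⟨hst, hind⟩ hxs
    · intro hx
      obtain ⟨s, hs, hxs⟩ := Set.mem_iUnion₂.1 hx
      exact coneI_mono v hs.1 hxs
  rw [hrw]
  exact (Set.toFinite _).isClosed_biUnion fun s hs => isClosed_coneI_of_linIndep hs.2

theorem coneI_separation (v : ι → E) (t : Finset ι) {p q : E} (hp : p ∈ coneI v t)
    (hq : ∀ ε : ℝ, 0 < ε → ε ≤ 1 → p + ε • q ∉ coneI v t) :
    ∃ f : E →L[ℝ] ℝ, (∀ j ∈ t, f (v j) ≤ 0) ∧ f p = 0 ∧ 0 < f q := by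
  classical
  set v' : Option ι → E := fun o => o.elim (-p) v with hv'
  set t' : Finset (Option ι) := insert none (t.image some) with ht'
  have hsum : ∀ lam : Option ι → ℝ, ∑ j ∈ t', lam j • v' j
      = lam none • (-p) + ∑ j ∈ t, lam (some j) • v j := by
    intro lam
    rw [ht', Finset.sum_insert (by simp),
      Finset.sum_image (fun a _ b _ h => Option.some_injective _ h)]
    rfl
  have hCD : coneI v t ⊆ coneI v' t' := by
    rintro z ⟨lam, hlam, rfl⟩
    refine ⟨fun o => o.elim 0 lam, fun o => by cases o <;> simp [hlam], ?_⟩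
    rw [hsum]; simp
  have hqD : q ∉ coneI v' t' := by
    rintro ⟨lam, hlam, hqeq⟩
    rw [hsum] at hqeq
    set sc := lam none with hsc
    have hscnn : 0 ≤ sc := hlam none
    set z := ∑ j ∈ t, lam (some j) • v j with hz
    have hzC : z ∈ coneI v t := ⟨fun j => lam (some j), fun j => hlam _, rfl⟩
    set ε : ℝ := 1 / (sc + 1) with hε
    have hsc1 : 0 < sc + 1 := by linarith
    have hε0 : 0 < ε := by positivity
    have hε1 : ε ≤ 1 := by rw [hε]; rw [div_le_one hsc1]; linarith
    refine hq ε hε0 hε1 ?_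
    have : p + ε • q = (1 - ε * sc) • p + ε • z := by
      rw [hqeq]
      module
    rw [this]
    have h1 : 0 ≤ 1 - ε * sc := by
      have : ε * sc = sc / (sc + 1) := by rw [hε]; ring
      rw [this, sub_nonneg, div_le_one hsc1]; linarith
    exact add_mem_coneI (smul_mem_coneI hp h1) (smul_mem_coneI hzC hε0.le)
  obtain ⟨f, u, hfu, hfq⟩ := geometric_hahn_banach_closed_point
    (convex_coneI v' t') (isClosed_coneI v' t') hqD
  have hu0 : 0 < u := by simpa using hfu 0 (zero_mem_coneI v' t')
  have hfD : ∀ y ∈ coneI v' t', f y ≤ 0 := by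
    intro y hy
    by_contra hpos
    push_neg at hpos
    have hm : 0 < (u + 1) / f y := by positivity
    have := hfu (((u + 1) / f y) • y) (smul_mem_coneI hy hm.le)
    rw [map_smul] at this
    have : (u + 1) / f y * f y = u + 1 := div_mul_cancel₀ _ hpos.ne'
    simp only [smul_eq_mul] at *
    nlinarith [hfu (((u + 1) / f y) • y) (smul_mem_coneI hy hm.le)]
  have hpD : f p ≤ 0 := hfD p (hCD hp)
  have hnpD : f (-p) ≤ 0 := hfD (-p) (mem_coneI_of_mem (v := v') (t := t')
    (j := none) (by simp [ht']))
  rw [map_neg] at hnpD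
  refine ⟨f, ?_, le_antisymm hpD (by linarith), lt_trans hu0 hfq⟩
  intro j hj
  exact hfD (v j) (mem_coneI_of_mem (v := v') (t := t') (j := some j) (by simp [ht', hj]))

end General

open Matrix

/-- The cone of nonnegative real combinations of the columns `a_j`, `j ∈ τ`. -/
def posCone {d n : ℕ} (A : Matrix (Fin d) (Fin n) ℤ) (τ : Finset (Fin n)) :
    Set (Fin d → ℝ) :=
  {x | ∃ lam : Fin n → ℝ, (∀ j, 0 ≤ lam j) ∧ x = fun i => ∑ j ∈ τ, lam j * (A i j : ℝ)}

/-- `s ∈ T_{w}` computed with respect to the submatrix `A_τ` (only the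
coordinates of `w` indexed by `τ` are relevant). -/
def memTwRel {d n : ℕ} (A : Matrix (Fin d) (Fin n) ℤ) (τ : Finset (Fin n))
    (w : Fin n → ℝ) (s : Finset (Fin n)) : Prop :=
  s ⊆ τ ∧ ∃ c : Fin d → ℝ, (∀ j ∈ s, (∑ i, c i * (A i j : ℝ)) = w j) ∧
    ∀ j ∈ τ, j ∉ s → (∑ i, c i * (A i j : ℝ)) < w j

/-- `s` is a facet of `T_w` (with respect to `A_τ`): `s ∈ T_w` and `rank A_s = d`,
i.e. the columns indexed by `s` span `ℝ^d`. -/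
def isFacetRel {d n : ℕ} (A : Matrix (Fin d) (Fin n) ℤ) (τ : Finset (Fin n))
    (w : Fin n → ℝ) (s : Finset (Fin n)) : Prop :=
  memTwRel A τ w s ∧
    Submodule.span ℝ (Set.range fun j : {j // j ∈ s} => fun i => (A i j.1 : ℝ)) = ⊤

/-- `T_w` is a regular triangulation of `A_τ`: every facet `s` satisfies `|s| = d`
and `det A_s ≠ 0` (equivalently, its columns are linearly independent), and
`pos(A_τ) = ⋃_{s facet} pos(s)`. -/
def isRegTriangRel {d n : ℕ} (A : Matrix (Fin d) (Fin n) ℤ) (τ : Finset (Fin n))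
    (w : Fin n → ℝ) : Prop :=
  (∀ s : Finset (Fin n), isFacetRel A τ w s → s.card = d ∧
      LinearIndependent ℝ (fun j : {j // j ∈ s} => fun i => (A i j.1 : ℝ))) ∧
    posCone A τ = ⋃ s ∈ {s : Finset (Fin n) | isFacetRel A τ w s}, posCone A s

section Glue

variable {d n : ℕ}

/-- the `j`-th column of `A`, as a real vector -/
def colA (A : Matrix (Fin d) (Fin n) ℤ) : Fin n → (Fin d → ℝ) := fun j i => (A i j : ℝ)

/-- pairing -/
def dotc (c y : Fin d → ℝ) : ℝ := ∑ i, c i * y i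

lemma dotc_col (A : Matrix (Fin d) (Fin n) ℤ) (c : Fin d → ℝ) (j : Fin n) :
    dotc c (colA A j) = ∑ i, c i * (A i j : ℝ) := rfl

lemma dotc_add (c c' y : Fin d → ℝ) : dotc (c + c') y = dotc c y + dotc c' y := by
  simp [dotc, add_mul, Finset.sum_add_distrib]

lemma dotc_smul (M : ℝ) (c y : Fin d → ℝ) : dotc (M • c) y = M * dotc c y := by
  simp [dotc, Finset.mul_sum, mul_assoc]

lemma dotc_sum (c : Fin d → ℝ) {ι : Type*} (t : Finset ι) (lam : ι → ℝ)
    (u : ι → (Fin d → ℝ)) :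
    dotc c (∑ j ∈ t, lam j • u j) = ∑ j ∈ t, lam j * dotc c (u j) := by
  unfold dotc
  have key : ∀ i, c i * (∑ j ∈ t, lam j • u j) i = ∑ j ∈ t, lam j * (c i * u j i) := by
    intro i
    rw [Finset.sum_apply, Finset.mul_sum]
    exact Finset.sum_congr rfl fun j _ => by simp; ring
  rw [Finset.sum_congr rfl (fun i _ => key i), Finset.sum_comm]
  exact Finset.sum_congr rfl fun j _ => by rw [Finset.mul_sum]

lemma posCone_eq_coneI (A : Matrix (Fin d) (Fin n) ℤ) (τ : Finset (Fin n)) :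
    posCone A τ = coneI (colA A) τ := by
  unfold posCone coneI
  ext x
  refine exists_congr fun lam => and_congr_right fun _ => ?_
  constructor
  · intro h; rw [h]; funext i; symm
    rw [Finset.sum_apply]
    exact Finset.sum_congr rfl fun j _ => by simp [colA, mul_comm]
  · intro h; rw [h]; funext i
    rw [Finset.sum_apply]
    exact Finset.sum_congr rfl fun j _ => by simp [colA, mul_comm]

lemma span_range_eq (A : Matrix (Fin d) (Fin n) ℤ) (s : Finset (Fin n)) :
    Submodule.span ℝ (Set.range fun j : {j // j ∈ s} => fun i => (A i j.1 : ℝ))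
      = Submodule.span ℝ (colA A '' ↑s) := by
  congr 1
  have : (fun j : {j // j ∈ s} => fun i => (A i j.1 : ℝ)) = colA A ∘ (Subtype.val) := rfl
  rw [this, Set.range_comp, Subtype.range_coe_subtype, Finset.setOf_mem]

end Glue
section Shift

variable {d n : ℕ}

lemma memTwRel_iff_dotc (A : Matrix (Fin d) (Fin n) ℤ) (τ : Finset (Fin n))
    (w : Fin n → ℝ) (s : Finset (Fin n)) :
    memTwRel A τ w s ↔ s ⊆ τ ∧ ∃ c : Fin d → ℝ, (∀ j ∈ s, dotc c (colA A j) = w j) ∧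
      ∀ j ∈ τ, j ∉ s → dotc c (colA A j) < w j := Iff.rfl

lemma memTwRel_shift (A : Matrix (Fin d) (Fin n) ℤ) (τ : Finset (Fin n))
    (w : Fin n → ℝ) (s : Finset (Fin n)) (c' : Fin d → ℝ) (h : memTwRel A τ w s) :
    memTwRel A τ (fun j => w j + dotc c' (colA A j)) s := by
  obtain ⟨hsub, c, heq, hlt⟩ := h
  exact ⟨hsub, c + c', fun j hj => by rw [← dotc_col, dotc_add, dotc_col, heq j hj],
    fun j hj hjs => by rw [← dotc_col, dotc_add, dotc_col]; exact add_lt_add_of_lt_of_le (hlt j hj hjs) le_rfl⟩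

lemma isFacetRel_shift_iff (A : Matrix (Fin d) (Fin n) ℤ) (τ : Finset (Fin n))
    (w : Fin n → ℝ) (s : Finset (Fin n)) (c' : Fin d → ℝ) :
    isFacetRel A τ (fun j => w j + dotc c' (colA A j)) s ↔ isFacetRel A τ w s := by
  constructor
  · rintro ⟨hm, hs⟩
    refine ⟨?_, hs⟩
    have h2 := memTwRel_shift A τ _ s (-c') hm
    have hfun : (fun j => (w j + dotc c' (colA A j)) + dotc (-c') (colA A j)) = w := by
      funext j
      have hneg : dotc (-c') (colA A j) = -dotc c' (colA A j) := by
        have := dotc_smul (-1) c' (colA A j); simpa using this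
      rw [hneg]; ring
    rwa [hfun] at h2
  · rintro ⟨hm, hs⟩
    exact ⟨memTwRel_shift A τ w s c' hm, hs⟩

lemma isRegTriangRel_shift (A : Matrix (Fin d) (Fin n) ℤ) (τ : Finset (Fin n))
    (w : Fin n → ℝ) (c' : Fin d → ℝ) (h : isRegTriangRel A τ w) :
    isRegTriangRel A τ (fun j => w j + dotc c' (colA A j)) := by
  constructor
  · intro s hs
    exact h.1 s ((isFacetRel_shift_iff A τ w s c').1 hs)
  · have hset : {s : Finset (Fin n) | isFacetRel A τ (fun j => w j + dotc c' (colA A j)) s}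
        = {s : Finset (Fin n) | isFacetRel A τ w s} := by
      ext s; exact isFacetRel_shift_iff A τ w s c'
    rw [hset]; exact h.2

end Shift

section CellIndep

variable {d n : ℕ}

/-- Columns indexed by any cell of a regular triangulation of a pointed
configuration are linearly independent. -/
lemma cellIndep (A : Matrix (Fin d) (Fin n) ℤ) (τ : Finset (Fin n)) (η : Fin n → ℝ)
    (c₀ : Fin d → ℝ) (hc₀ : ∀ j ∈ τ, 0 < dotc c₀ (colA A j))
    (hreg : isRegTriangRel A τ η) {s₀ : Finset (Fin n)} (hs₀ : memTwRel A τ η s₀)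
    {ν : Fin n → ℝ} (hsupp : ∀ j, ν j ≠ 0 → j ∈ s₀)
    (hrel : ∑ j, ν j • colA A j = 0) : ν = 0 := by
  classical
  by_contra hne
  obtain ⟨jstar, hjstar⟩ := Function.ne_iff.1 hne
  obtain ⟨hsub, c'', heq'', hlt''⟩ := hs₀
  set νp : Fin n → ℝ := fun j => max (ν j) 0 with hνp
  set νm : Fin n → ℝ := fun j => max (-ν j) 0 with hνm
  have hν_split : ∀ j, ν j = νp j - νm j := by
    intro j; rcases le_total 0 (ν j) with h | h <;> simp [hνp, hνm, max_eq_left, max_eq_right, h] <;> linarith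
  have hνp_nn : ∀ j, 0 ≤ νp j := fun j => le_max_right _ _
  have hνm_nn : ∀ j, 0 ≤ νm j := fun j => le_max_right _ _
  have hsuppp : ∀ j, νp j ≠ 0 → j ∈ s₀ := by
    intro j hj; refine hsupp j fun h0 => hj ?_; simp [hνp, h0]
  have hsuppm : ∀ j, νm j ≠ 0 → j ∈ s₀ := by
    intro j hj; refine hsupp j fun h0 => hj ?_; simp [hνm, h0]
  have hc''_le : ∀ j ∈ τ, dotc c'' (colA A j) ≤ η j := by
    intro j hj
    by_cases h : j ∈ s₀
    · exact le_of_eq (heq'' j h)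
    · exact (hlt'' j hj h).le
  set y : Fin d → ℝ := ∑ j, νp j • colA A j with hy
  have hy' : y = ∑ j, νm j • colA A j := by
    have hsub0 : ∑ j, νp j • colA A j - ∑ j, νm j • colA A j = 0 := by
      rw [← Finset.sum_sub_distrib, ← hrel]
      exact Finset.sum_congr rfl fun j _ => by rw [hν_split j, sub_smul]
    rw [hy, ← sub_eq_zero]; exact hsub0
  have hνη : ∑ j, ν j * η j = 0 := by
    have h1 : ∑ j, ν j * η j = ∑ j, ν j * dotc c'' (colA A j) := by
      refine Finset.sum_congr rfl fun j _ => ?_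
      by_cases hj : ν j = 0
      · simp [hj]
      · rw [dotc_col, heq'' j (hsupp j hj)]
    rw [h1, ← dotc_sum c'' Finset.univ ν (colA A), hrel]
    simp [dotc]
  set H : ℝ := ∑ j, νp j * η j with hH
  have hHm : ∑ j, νm j * η j = H := by
    have : ∑ j, ν j * η j = ∑ j, νp j * η j - ∑ j, νm j * η j := by
      rw [← Finset.sum_sub_distrib]
      exact Finset.sum_congr rfl fun j _ => by rw [hν_split j]; ring
    rw [this] at hνη; rw [hH]; linarith
  have hymem : y ∈ posCone A τ := by
    rw [posCone_eq_coneI]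
    refine ⟨νp, hνp_nn, ?_⟩
    rw [hy, ← Finset.sum_subset (Finset.subset_univ τ)]
    intro j _ hjτ
    have : νp j = 0 := by
      by_contra h; exact hjτ (hsub (hsuppp j h))
    simp [this]
  rw [hreg.2] at hymem
  obtain ⟨σ, hσfacet, hyσ⟩ := Set.mem_iUnion₂.1 hymem
  rw [posCone_eq_coneI] at hyσ
  obtain ⟨μ, hμ, hyμ⟩ := hyσ
  obtain ⟨⟨hσsub, cσ, heqσ, hltσ⟩, hσspan⟩ := id hσfacet
  have hcσ_le : ∀ j ∈ τ, dotc cσ (colA A j) ≤ η j := by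
    intro j hj
    by_cases h : j ∈ σ
    · exact le_of_eq (heqσ j h)
    · exact (hltσ j hj h).le
  have e1 : dotc c'' y = H := by
    rw [hy, dotc_sum, hH]
    refine Finset.sum_congr rfl fun j _ => ?_
    by_cases hj : νp j = 0
    · simp [hj]
    · rw [dotc_col, heq'' j (hsuppp j hj)]
  have e2 : dotc c'' y ≤ dotc cσ y := by
    rw [hyμ, dotc_sum, dotc_sum]
    refine Finset.sum_le_sum fun j hj => ?_
    rw [dotc_col (A := A) (c := cσ), heqσ j hj]
    exact mul_le_mul_of_nonneg_left (hc''_le j (hσsub hj)) (hμ j)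
  have e3 : dotc cσ y ≤ H := by
    rw [hy, dotc_sum, hH]
    refine Finset.sum_le_sum fun j _ => ?_
    by_cases hj : νp j = 0
    · simp [hj]
    · exact mul_le_mul_of_nonneg_left (hcσ_le j (hsub (hsuppp j hj))) (hνp_nn j)
  have eq1 : dotc cσ y = H := le_antisymm e3 (by rw [← e1]; exact e2)
  have hsupp_pσ : ∀ j, νp j ≠ 0 → j ∈ σ := by
    intro j0 hj0
    by_contra hj0σ
    have hstrict : ∑ j, νp j * dotc cσ (colA A j) < ∑ j, νp j * η j := by
      refine Finset.sum_lt_sum (fun j _ => ?_) ⟨j0, Finset.mem_univ j0, ?_⟩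
      · by_cases hj : νp j = 0
        · simp [hj]
        · exact mul_le_mul_of_nonneg_left (hcσ_le j (hsub (hsuppp j hj))) (hνp_nn j)
      · have hpos : 0 < νp j0 := lt_of_le_of_ne (hνp_nn j0) (Ne.symm hj0)
        exact mul_lt_mul_of_pos_left (hltσ j0 (hsub (hsuppp j0 hj0)) hj0σ) hpos
    rw [← hH] at hstrict
    have : dotc cσ y = ∑ j, νp j * dotc cσ (colA A j) := by rw [hy, dotc_sum]
    rw [eq1] at this; linarith
  have hsupp_mσ : ∀ j, νm j ≠ 0 → j ∈ σ := by
    intro j0 hj0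
    by_contra hj0σ
    have hstrict : ∑ j, νm j * dotc cσ (colA A j) < ∑ j, νm j * η j := by
      refine Finset.sum_lt_sum (fun j _ => ?_) ⟨j0, Finset.mem_univ j0, ?_⟩
      · by_cases hj : νm j = 0
        · simp [hj]
        · exact mul_le_mul_of_nonneg_left (hcσ_le j (hsub (hsuppm j hj))) (hνm_nn j)
      · have hpos : 0 < νm j0 := lt_of_le_of_ne (hνm_nn j0) (Ne.symm hj0)
        exact mul_lt_mul_of_pos_left (hltσ j0 (hsub (hsuppm j0 hj0)) hj0σ) hpos
    rw [hHm] at hstrict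
    have : dotc cσ y = ∑ j, νm j * dotc cσ (colA A j) := by rw [hy', dotc_sum]
    rw [eq1] at this; linarith
  have hsuppσ : ∀ j, ν j ≠ 0 → j ∈ σ := by
    intro j hj
    rcases lt_trichotomy (ν j) 0 with h | h | h
    · exact hsupp_mσ j (by simp [hνm]; linarith)
    · exact absurd h hj
    · exact hsupp_pσ j (by simp [hνp]; linarith)
  have hind := (hreg.1 σ hσfacet).2
  have hvanish := Fintype.linearIndependent_iff.1 hind (fun j => ν j.1)
  have hzero : ∑ j : {j // j ∈ σ}, ν j.1 • (fun i => (A i j.1 : ℝ)) = 0 := by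
    show ∑ j : {j // j ∈ σ}, ν j.1 • colA A j.1 = 0
    rw [Finset.sum_coe_sort σ (fun j => ν j • colA A j),
      Finset.sum_subset (Finset.subset_univ σ) (fun j _ hjσ => by
        have : ν j = 0 := by by_contra h; exact hjσ (hsuppσ j h)
        simp [this])]
    exact hrel
  have := hvanish hzero
  have hjσ : jstar ∈ σ := hsuppσ jstar hjstar
  exact hjstar (this ⟨jstar, hjσ⟩)

end CellIndep
section Covering

open MeasureTheory

variable {d n : ℕ}

lemma pi_decomp (y : Fin d → ℝ) : ∑ i, y i • (Pi.single i (1:ℝ) : Fin d → ℝ) = y := by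
  funext j
  rw [Finset.sum_apply]
  simp [Pi.single_apply]

lemma sum_smul_prod {V : Type*} [AddCommGroup V] [Module ℝ V] {ι : Type*} (t : Finset ι)
    (lam : ι → ℝ) (f : ι → V) (g : ι → ℝ) :
    ∑ j ∈ t, lam j • ((f j, g j) : V × ℝ) = (∑ j ∈ t, lam j • f j, ∑ j ∈ t, lam j * g j) := by
  refine Prod.ext_iff.2 ⟨?_, ?_⟩
  · rw [Prod.fst_sum]; exact Finset.sum_congr rfl fun j _ => rfl
  · rw [Prod.snd_sum]; exact Finset.sum_congr rfl fun j _ => rfl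

lemma covering_lemma (A : Matrix (Fin d) (Fin n) ℤ)
    (hrank : (A.map (Int.cast : ℤ → ℝ)).rank = d) (w : Fin n → ℝ)
    (hwpos : ∀ j, 0 < w j)
    (hindep : ∀ s : Finset (Fin n), isFacetRel A Finset.univ w s →
      LinearIndependent ℝ (fun j : {j // j ∈ s} => colA A j)) :
    posCone A Finset.univ = ⋃ s ∈ {s : Finset (Fin n) | isFacetRel A Finset.univ w s},
      posCone A s := by
  classical
  set U := ⋃ s ∈ {s : Finset (Fin n) | isFacetRel A Finset.univ w s}, posCone A s with hU
  have hUclosed : IsClosed U :=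
    (Set.toFinite _).isClosed_biUnion fun s hs => by
      rw [posCone_eq_coneI]; exact isClosed_coneI_of_linIndep (hindep s hs)
  have hUsub : U ⊆ posCone A Finset.univ := by
    refine Set.iUnion₂_subset fun s _ => ?_
    rw [posCone_eq_coneI, posCone_eq_coneI]
    exact coneI_mono _ (Finset.subset_univ s)
  -- the bad set: union of all proper column spans
  set Bad : Set (Fin d → ℝ) := ⋃ S ∈ {S : Finset (Fin n) |
      Submodule.span ℝ (colA A '' ↑S) ≠ ⊤}, (Submodule.span ℝ (colA A '' ↑S) : Set _) with hBad
  have hBadnull : volume Bad = 0 := by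
    refine (measure_biUnion_null_iff (Set.to_countable _)).2 fun S hS => ?_
    exact Measure.addHaar_submodule _ _ hS
  -- main certificate argument
  have key : ∀ z ∈ posCone A Finset.univ, z ∉ Bad → z ∈ U := by
    intro z hz hzBad
    set chat : Fin n → ((Fin d → ℝ) × ℝ) := fun j => (colA A j, w j) with hchat
    rw [posCone_eq_coneI] at hz
    obtain ⟨lam₀, hlam₀, hzeq⟩ := hz
    set R : Set ℝ := {r : ℝ | (z, r) ∈ coneI chat Finset.univ} with hR
    have hR1 : (∑ j, lam₀ j * w j) ∈ R := by
      refine ⟨lam₀, hlam₀, ?_⟩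
      rw [sum_smul_prod]
      exact Prod.ext_iff.2 ⟨hzeq, rfl⟩
    have hRbdd : BddBelow R := by
      refine ⟨0, fun r hr => ?_⟩
      obtain ⟨lam, hlam, hreq⟩ := hr
      rw [sum_smul_prod] at hreq
      rw [show r = ∑ j, lam j * w j from congrArg Prod.snd hreq]
      exact Finset.sum_nonneg fun j _ => mul_nonneg (hlam j) (hwpos j).le
    have hRclosed : IsClosed R := by
      have : R = (fun r : ℝ => ((z, r) : (Fin d → ℝ) × ℝ)) ⁻¹' coneI chat Finset.univ := rfl
      rw [this]
      exact (isClosed_coneI chat Finset.univ).preimage (continuous_const.prodMk continuous_id)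
    set h : ℝ := sInf R with hh
    have hhR : h ∈ R := hRclosed.csInf_mem ⟨_, hR1⟩ hRbdd
    have hhnot : ∀ ε : ℝ, 0 < ε → ε ≤ 1 →
        ((z, h) : (Fin d → ℝ) × ℝ) + ε • (((0 : Fin d → ℝ), (-1:ℝ))) ∉ coneI chat Finset.univ := by
      intro ε hε _ hmem
      have hpt : ((z, h) : (Fin d → ℝ) × ℝ) + ε • (((0 : Fin d → ℝ), (-1:ℝ))) = (z, h - ε) := by
        refine Prod.ext_iff.2 ⟨?_, ?_⟩ <;> simp <;> ring
      rw [hpt] at hmem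
      have : h ≤ h - ε := csInf_le hRbdd hmem
      linarith
    obtain ⟨f, hfle, hfp, hfq⟩ := coneI_separation chat Finset.univ hhR hhnot
    set γ : ℝ := f ((0 : Fin d → ℝ), (-1:ℝ)) with hγdef
    have hγ : 0 < γ := hfq
    set c : Fin d → ℝ := fun i => f ((Pi.single i 1 : Fin d → ℝ), (0:ℝ)) / γ with hc
    have hdec : ∀ (y : Fin d → ℝ) (r : ℝ),
        f (y, r) = (∑ i, y i * f ((Pi.single i 1 : Fin d → ℝ), (0:ℝ))) - r * γ := by
      intro y r
      have hyr : ((y, r) : (Fin d → ℝ) × ℝ)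
          = (∑ i, y i • (((Pi.single i 1 : Fin d → ℝ), (0:ℝ)) : (Fin d → ℝ) × ℝ))
            + (-r) • (((0 : Fin d → ℝ), (-1:ℝ)) : (Fin d → ℝ) × ℝ) := by
        rw [sum_smul_prod]
        refine Prod.ext_iff.2 ⟨?_, ?_⟩ <;> simp [pi_decomp]
      rw [hyr, _root_.map_add, _root_.map_sum]
      simp only [_root_.map_smul, smul_eq_mul]
      rw [← hγdef]; ring
    have hkey : ∀ (y : Fin d → ℝ) (r : ℝ), γ * dotc c y = f (y, r) + r * γ := by
      intro y r
      rw [hdec y r, dotc]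
      rw [Finset.mul_sum]
      have : ∀ i, γ * (c i * y i) = y i * f ((Pi.single i 1 : Fin d → ℝ), (0:ℝ)) := by
        intro i; rw [hc]; field_simp
      rw [Finset.sum_congr rfl fun i _ => this i]; ring
    have hle : ∀ j, dotc c (colA A j) ≤ w j := by
      intro j
      have h1 : f (chat j) ≤ 0 := hfle j (Finset.mem_univ j)
      have h2 := hkey (colA A j) (w j)
      rw [hchat] at h1
      have : γ * dotc c (colA A j) ≤ w j * γ := by rw [h2]; nlinarith [h1]
      nlinarith [this, hγ]
    have heqz : dotc c z = h := by
      have h2 := hkey z h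
      rw [hfp] at h2
      have : γ * dotc c z = h * γ := by rw [h2]; ring
      nlinarith [this, hγ]
    set s : Finset (Fin n) := Finset.univ.filter (fun j => dotc c (colA A j) = w j) with hs
    obtain ⟨lam, hlam, hzheq⟩ := hhR
    rw [sum_smul_prod] at hzheq
    have hz1 : z = ∑ j, lam j • colA A j := congrArg Prod.fst hzheq
    have hz2 : h = ∑ j, lam j * w j := congrArg Prod.snd hzheq
    have hsum0 : ∑ j, lam j * (w j - dotc c (colA A j)) = 0 := by
      have e1 : ∑ j, lam j * dotc c (colA A j) = dotc c z := by
        rw [hz1, dotc_sum]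
      have : ∑ j, lam j * (w j - dotc c (colA A j))
          = (∑ j, lam j * w j) - ∑ j, lam j * dotc c (colA A j) := by
        rw [← Finset.sum_sub_distrib]; exact Finset.sum_congr rfl fun j _ => by ring
      rw [this, e1, ← hz2, heqz]; ring
    have hterm := (Finset.sum_eq_zero_iff_of_nonneg (fun j _ =>
      mul_nonneg (hlam j) (by linarith [hle j]))).1 hsum0
    have hlamsupp : ∀ j, lam j ≠ 0 → j ∈ s := by
      intro j hj
      have := hterm j (Finset.mem_univ j)
      rw [Finset.mem_filter]
      refine ⟨Finset.mem_univ j, ?_⟩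
      rcases mul_eq_zero.1 this with h | h
      · exact absurd h hj
      · linarith
    have hzs : z ∈ posCone A s := by
      rw [posCone_eq_coneI]
      refine ⟨lam, hlam, ?_⟩
      rw [hz1, ← Finset.sum_subset (Finset.subset_univ s)]
      intro j _ hjs
      have : lam j = 0 := by by_contra hcon; exact hjs (hlamsupp j hcon)
      simp [this]
    have hzspan : z ∈ Submodule.span ℝ (colA A '' ↑s) := by
      rw [posCone_eq_coneI] at hzs
      obtain ⟨mu, hmu, hzmu⟩ := hzs
      rw [hzmu]
      exact Submodule.sum_mem _ fun j hj => Submodule.smul_mem _ _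
        (Submodule.subset_span ⟨j, hj, rfl⟩)
    have hspan_top : Submodule.span ℝ (colA A '' ↑s) = ⊤ := by
      by_contra hcon
      exact hzBad (Set.mem_biUnion (show s ∈ {S : Finset (Fin n) |
        Submodule.span ℝ (colA A '' ↑S) ≠ ⊤} from hcon) hzspan)
    have hfacet : isFacetRel A Finset.univ w s := by
      refine ⟨⟨Finset.subset_univ s, c, ?_, ?_⟩, ?_⟩
      · intro j hj; exact (Finset.mem_filter.1 hj).2
      · intro j _ hjs
        refine lt_of_le_of_ne (hle j) fun heq => hjs ?_
        exact Finset.mem_filter.2 ⟨Finset.mem_univ j, heq⟩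
      · rw [span_range_eq]; exact hspan_top
    exact Set.mem_biUnion hfacet hzs
  -- density of good points, using an interior point
  refine le_antisymm ?_ hUsub
  intro x hx
  -- interior point b
  have hsurj : LinearMap.range (A.map (Int.cast : ℤ → ℝ)).mulVecLin = ⊤ := by
    apply Submodule.eq_top_of_finrank_eq
    rw [show Module.finrank ℝ (LinearMap.range (A.map (Int.cast : ℤ → ℝ)).mulVecLin)
      = (A.map (Int.cast : ℤ → ℝ)).rank from rfl, hrank]
    simp [Module.finrank_pi]
  obtain ⟨g, hg⟩ := (A.map (Int.cast : ℤ → ℝ)).mulVecLin.exists_rightInverse_of_surjective hsurj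
  have hgapp : ∀ v, (A.map (Int.cast : ℤ → ℝ)).mulVecLin (g v) = v := fun v =>
    congrFun (congrArg DFunLike.coe hg) v
  set C : ℝ := ‖(LinearMap.toContinuousLinearMap g : (Fin d → ℝ) →L[ℝ] (Fin n → ℝ))‖ with hC
  have hCnn : 0 ≤ C := norm_nonneg _
  set δ : ℝ := 1 / (C + 1) with hδ
  have hδpos : 0 < δ := by rw [hδ]; positivity
  have hmulvec : ∀ lam : Fin n → ℝ, ∀ i, ((A.map (Int.cast : ℤ → ℝ)).mulVecLin lam) i
      = ∑ j, lam j * (A i j : ℝ) := by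
    intro lam i
    simp [Matrix.mulVecLin_apply, Matrix.mulVec, dotProduct, Matrix.map_apply, mul_comm]
  have hposmem : ∀ lam : Fin n → ℝ, (∀ j, 0 ≤ lam j) →
      (A.map (Int.cast : ℤ → ℝ)).mulVecLin lam ∈ posCone A Finset.univ := by
    intro lam hlam
    exact ⟨lam, hlam, funext fun i => hmulvec lam i⟩
  set b : Fin d → ℝ := (A.map (Int.cast : ℤ → ℝ)).mulVecLin (fun _ => 1) with hb
  have hball : Metric.ball b δ ⊆ posCone A Finset.univ := by
    intro y hy
    set lam : Fin n → ℝ := (fun _ => (1:ℝ)) + g (y - b) with hlam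
    have h1 : (A.map (Int.cast : ℤ → ℝ)).mulVecLin lam = y := by
      rw [hlam, _root_.map_add, hgapp, hb]; abel
    have h2 : ∀ j, 0 ≤ lam j := by
      intro j
      have hnorm : ‖g (y - b)‖ ≤ C * ‖y - b‖ := by
        have := (LinearMap.toContinuousLinearMap g).le_opNorm (y - b)
        simpa [hC] using this
      have hyb : ‖y - b‖ < δ := by
        rw [← dist_eq_norm]; exact Metric.mem_ball.1 hy
      have habs : |g (y - b) j| ≤ C * ‖y - b‖ := by
        refine le_trans ?_ hnorm
        exact norm_le_pi_norm (g (y - b)) j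
      have hlt : C * ‖y - b‖ < 1 := by
        calc C * ‖y - b‖ ≤ C * δ := by
              apply mul_le_mul_of_nonneg_left hyb.le hCnn
          _ = C / (C + 1) := by rw [hδ]; ring
          _ < 1 := (div_lt_one (by linarith)).2 (by linarith)
      have := abs_le.1 (le_of_lt (lt_of_le_of_lt habs hlt))
      simp only [hlam, Pi.add_apply]
      linarith [this.1]
    rw [← h1]; exact hposmem lam h2
  have hbint : b ∈ interior (posCone A Finset.univ) :=
    mem_interior.2 ⟨Metric.ball b δ, hball, Metric.isOpen_ball, Metric.mem_ball_self hδpos⟩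
  have hconv : Convex ℝ (posCone A Finset.univ) := by
    rw [posCone_eq_coneI]; exact convex_coneI _ _
  have hclosmem : x ∈ closure (posCone A Finset.univ \ Bad) := by
    rw [Metric.mem_closure_iff]
    intro ε hε
    set D : ℝ := dist b x with hD
    have hDnn : 0 ≤ D := dist_nonneg
    set t : ℝ := min (1/2) (ε / (2 * (D + 1))) with ht
    have ht0 : 0 < t := lt_min (by norm_num) (by positivity)
    have ht1 : t ≤ 1/2 := min_le_left _ _
    have htD : t * D < ε / 2 := by
      have h1 : t ≤ ε / (2 * (D + 1)) := min_le_right _ _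
      have h3 : 0 < 2 * (D + 1) := by linarith
      calc t * D ≤ (ε / (2 * (D + 1))) * D := by nlinarith
        _ < ε / 2 := by
            rw [div_mul_eq_mul_div, div_lt_div_iff₀ h3 (by norm_num)]
            nlinarith
    set xt := t • b + (1 - t) • x with hxt
    have hxtint : xt ∈ interior (posCone A Finset.univ) :=
      hconv.combo_interior_closure_mem_interior hbint (subset_closure hx) ht0
        (by linarith) (by ring)
    have hdxt : dist xt x < ε / 2 := by
      have hdiff : xt - x = t • (b - x) := by rw [hxt]; module
      rw [dist_eq_norm, hdiff, norm_smul]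
      simp only [Real.norm_eq_abs, abs_of_pos ht0]
      calc t * ‖b - x‖ = t * D := by rw [hD, dist_eq_norm]
        _ < ε/2 := htD
    obtain ⟨r, hr0, hrball⟩ : ∃ r > 0, Metric.ball xt r ⊆ posCone A Finset.univ := by
      obtain ⟨r, hr0, hrsub⟩ := Metric.isOpen_iff.1 isOpen_interior xt hxtint
      exact ⟨r, hr0, hrsub.trans interior_subset⟩
    set r' : ℝ := min r (ε / 2) with hr'
    have hr'0 : 0 < r' := lt_min hr0 (by positivity)
    have hnot : ¬ (Metric.ball xt r' ⊆ Bad) := by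
      intro hsub
      have h1 : (0:ENNReal) < volume (Metric.ball xt r') := Metric.measure_ball_pos volume xt hr'0
      have h2 : volume (Metric.ball xt r') ≤ volume Bad := measure_mono hsub
      rw [hBadnull] at h2
      exact absurd (le_antisymm h2 zero_le) (ne_of_gt h1)
    obtain ⟨y, hyball, hyBad⟩ := Set.not_subset.1 hnot
    refine ⟨y, ⟨hrball (Metric.ball_subset_ball (min_le_left _ _) hyball), hyBad⟩, ?_⟩
    have hdy : dist xt y < ε/2 :=
      lt_of_lt_of_le (by rw [dist_comm]; exact Metric.mem_ball.1 hyball) (min_le_right _ _)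
    calc dist x y ≤ dist x xt + dist xt y := dist_triangle _ _ _
      _ < ε/2 + ε/2 := by rw [dist_comm x xt]; exact add_lt_add hdxt hdy
      _ = ε := by ring
  have hsubU : posCone A Finset.univ \ Bad ⊆ U := fun z hz => key z hz.1 hz.2
  have hxc := (closure_mono hsubU) hclosmem
  rwa [hUclosed.closure_eq] at hxc

end Covering
section FinalAux

open MeasureTheory

variable {d n : ℕ}

/-- Existence of a "generic" vector avoiding finitely many nonconstant affine conditions,
inside a coordinate box. -/
lemma exists_generic (τ : Finset (Fin n)) (B : {j : Fin n // j ∉ τ} → ℝ)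
    (DepSet : Finset (Finset (Fin n))) (nu : Finset (Fin n) → (Fin n → ℝ))
    (hnu : ∀ s ∈ DepSet, ∃ j, j ∉ τ ∧ nu s j ≠ 0) (η : Fin n → ℝ) :
    ∃ v : {j : Fin n // j ∉ τ} → ℝ, (∀ k, B k < v k ∧ v k < B k + 1) ∧
      ∀ s ∈ DepSet, ∑ j, nu s j *
        (if h : j ∈ τ then η j else v ⟨j, h⟩) ≠ 0 := by
  classical
  set wv : ({j : Fin n // j ∉ τ} → ℝ) → Fin n → ℝ := fun v j => if h : j ∈ τ then η j else v ⟨j, h⟩ with hwv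
  set BadW : Finset (Fin n) → Set ({j : Fin n // j ∉ τ} → ℝ) := fun s => {v | ∑ j, nu s j * wv v j = 0} with hBadW
  have hnull : ∀ s ∈ DepSet, volume (BadW s) = 0 := by
    intro s hs
    obtain ⟨j₀, hj₀τ, hj₀⟩ := hnu s hs
    set L : ({j : Fin n // j ∉ τ} → ℝ) →ₗ[ℝ] ℝ := ∑ k : {j : Fin n // j ∉ τ}, nu s k.1 • LinearMap.proj k with hL
    have hLapp : ∀ v : ({j : Fin n // j ∉ τ} → ℝ), L v = ∑ k : {j : Fin n // j ∉ τ}, nu s k.1 * v k := by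
      intro v
      rw [hL, LinearMap.sum_apply]
      exact Finset.sum_congr rfl fun k _ => by
        rw [LinearMap.smul_apply, LinearMap.proj_apply, smul_eq_mul]
    set Cs : ℝ := ∑ j ∈ τ, nu s j * η j with hCs
    have hdecomp : ∀ v : ({j : Fin n // j ∉ τ} → ℝ), ∑ j, nu s j * wv v j = Cs + L v := by
      intro v
      rw [← Finset.sum_add_sum_compl τ (fun j => nu s j * wv v j)]
      congr 1
      · rw [hCs]
        exact Finset.sum_congr rfl fun j hj => by simp [hwv, hj]
      · rw [Finset.sum_subtype (p := fun j => j ∉ τ) τᶜ (fun x => by simp) (fun j => nu s j * wv v j), hLapp]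
        exact Finset.sum_congr rfl fun k _ => by simp [hwv, k.2]
    have hBadWeq : BadW s = {v : ({j : Fin n // j ∉ τ} → ℝ) | L v = -Cs} := by
      ext v; simp only [hBadW, Set.mem_setOf_eq, hdecomp v]; constructor <;> intro h <;> linarith
    have hker : LinearMap.ker L ≠ ⊤ := by
      intro htop
      have : L (Pi.single (⟨j₀, hj₀τ⟩ : {j : Fin n // j ∉ τ}) 1) = 0 := by
        have : Pi.single (⟨j₀, hj₀τ⟩ : {j : Fin n // j ∉ τ}) (1:ℝ) ∈ LinearMap.ker L := by
          rw [htop]; trivial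
        exact LinearMap.mem_ker.1 this
      rw [hLapp] at this
      rw [Finset.sum_eq_single (⟨j₀, hj₀τ⟩ : {j : Fin n // j ∉ τ})] at this
      · simp at this; exact hj₀ this
      · intro k _ hk; rw [Pi.single_eq_of_ne hk]; ring
      · intro h; exact absurd (Finset.mem_univ _) h
    rw [hBadWeq]
    by_cases hex : ∃ v₀ : ({j : Fin n // j ∉ τ} → ℝ), L v₀ = -Cs
    · obtain ⟨v₀, hv₀⟩ := hex
      have heq : {v : ({j : Fin n // j ∉ τ} → ℝ) | L v = -Cs} = (fun v => -v₀ + v) ⁻¹' (LinearMap.ker L : Set ({j : Fin n // j ∉ τ} → ℝ)) := by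
        ext v
        simp only [Set.mem_setOf_eq, Set.mem_preimage, SetLike.mem_coe, LinearMap.mem_ker,
          _root_.map_add, _root_.map_neg, hv₀]
        constructor <;> intro h <;> linarith
      rw [heq, measure_preimage_add]
      exact Measure.addHaar_submodule _ _ hker
    · have : {v : ({j : Fin n // j ∉ τ} → ℝ) | L v = -Cs} = ∅ := by
        ext v; simp only [Set.mem_setOf_eq, Set.mem_empty_iff_false, iff_false]
        exact fun h => hex ⟨v, h⟩
      rw [this]; exact measure_empty
  set box : Set ({j : Fin n // j ∉ τ} → ℝ) := Set.univ.pi (fun k => Set.Ioo (B k) (B k + 1)) with hbox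
  have hvol : volume box = 1 := by
    rw [hbox, volume_pi_pi]
    simp [Real.volume_Ioo]
  have hfind : ∃ v ∈ box, ∀ s ∈ DepSet, v ∉ BadW s := by
    by_contra hcon
    push_neg at hcon
    have hsub : box ⊆ ⋃ s ∈ DepSet, BadW s := by
      intro v hv
      obtain ⟨s, hs, hvs⟩ := hcon v hv
      exact Set.mem_biUnion hs hvs
    have h1 : volume box ≤ volume (⋃ s ∈ DepSet, BadW s) := measure_mono hsub
    have h2 : volume (⋃ s ∈ DepSet, BadW s) ≤ ∑ s ∈ DepSet, volume (BadW s) :=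
      measure_biUnion_finset_le _ _
    rw [Finset.sum_congr rfl hnull] at h2
    simp only [Finset.sum_const, smul_zero] at h2
    rw [hvol] at h1
    exact absurd (le_trans h1 h2) (by norm_num)
  obtain ⟨v, hvbox, hvgood⟩ := hfind
  refine ⟨v, fun k => ?_, fun s hs => ?_⟩
  · have := (Set.mem_pi.1 hvbox) k (Set.mem_univ k)
    exact ⟨this.1, this.2⟩
  · exact fun h0 => hvgood s hs h0

end FinalAux
theorem stmt_4 {d n : ℕ} (A : Matrix (Fin d) (Fin n) ℤ)
    (hrank : (A.map (Int.cast : ℤ → ℝ)).rank = d)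
    (τ : Finset (Fin n))
    (hτrank : Submodule.span ℝ
        (Set.range fun j : {j // j ∈ τ} => fun i => (A i j.1 : ℝ)) = ⊤)
    (hpointed : ∃ c₀ : Fin d → ℝ, ∀ j ∈ τ, 0 < ∑ i, c₀ i * (A i j : ℝ))
    (w₀ : Fin n → ℝ) (hw₀ : isRegTriangRel A τ w₀) :
    ∃ w : Fin n → ℝ, isRegTriangRel A Finset.univ w ∧
      ∀ s : Finset (Fin n), isFacetRel A τ w₀ s → isFacetRel A Finset.univ w s := by
  classical
  obtain ⟨c₀, hc₀⟩ := hpointed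
  have hc₀' : ∀ j ∈ τ, 0 < dotc c₀ (colA A j) := hc₀
  -- Step 0: shift w₀ to be positive on τ
  set M : ℝ := if hτ : τ.Nonempty then
    τ.sup' hτ (fun j => (1 + |w₀ j|) / dotc c₀ (colA A j)) else 0 with hM
  set η : Fin n → ℝ := fun j => w₀ j + dotc (M • c₀) (colA A j) with hη
  have hηpos : ∀ j ∈ τ, 0 < η j := by
    intro j hj
    have hd : 0 < dotc c₀ (colA A j) := hc₀' j hj
    have hMle : (1 + |w₀ j|) / dotc c₀ (colA A j) ≤ M := by
      rw [hM, dif_pos ⟨j, hj⟩]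
      exact Finset.le_sup' (fun j => (1 + |w₀ j|) / dotc c₀ (colA A j)) hj
    have h1 : 1 + |w₀ j| ≤ M * dotc c₀ (colA A j) := by
      rw [div_le_iff₀ hd] at hMle; linarith
    have h2 := neg_abs_le (w₀ j)
    simp only [hη, dotc_smul]
    linarith
  have hηreg : isRegTriangRel A τ η := isRegTriangRel_shift A τ w₀ (M • c₀) hw₀
  have hηfacets : ∀ s, isFacetRel A τ η s ↔ isFacetRel A τ w₀ s := fun s =>
    isFacetRel_shift_iff A τ w₀ s (M • c₀)
  -- certificate chooser for η-facets
  set cert : Finset (Fin n) → (Fin d → ℝ) := fun s =>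
    if h : isFacetRel A τ η s then h.1.2.choose else 0 with hcert
  have hcert_spec : ∀ s, isFacetRel A τ η s →
      (∀ j ∈ s, dotc (cert s) (colA A j) = η j) ∧
      (∀ j ∈ τ, j ∉ s → dotc (cert s) (colA A j) < η j) := by
    intro s hs
    simp only [hcert]; rw [dif_pos hs]
    exact hs.1.2.choose_spec
  set FacetsSet : Finset (Finset (Fin n)) :=
    Finset.univ.filter (fun s => isFacetRel A τ η s) with hFS
  set B : {j : Fin n // j ∉ τ} → ℝ := fun k =>
    (insert (0:ℝ) (FacetsSet.image (fun s => dotc (cert s) (colA A k.1)))).max'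
      (Finset.insert_nonempty _ _) with hB
  have hB0 : ∀ k, 0 ≤ B k := by
    intro k
    simp only [hB]
    exact Finset.le_max' _ _ (Finset.mem_insert_self _ _)
  have hBge : ∀ k, ∀ s ∈ FacetsSet, dotc (cert s) (colA A k.1) ≤ B k := by
    intro k s hs
    simp only [hB]
    exact Finset.le_max' _ (dotc (cert s) (colA A k.1))
      (Finset.mem_insert_of_mem (Finset.mem_image_of_mem (fun s => dotc (cert s) (colA A k.1)) hs))
  -- dependency chooser
  set P : Finset (Fin n) → Prop := fun s => ∃ ν : Fin n → ℝ,
    (∀ j, ν j ≠ 0 → j ∈ s) ∧ (∑ j, ν j • colA A j = 0) ∧ (∃ j, j ∉ τ ∧ ν j ≠ 0) with hP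
  set nuOf : Finset (Fin n) → (Fin n → ℝ) := fun s => if h : P s then h.choose else 0 with hnuOf
  have hnu_spec : ∀ s, P s → (∀ j, nuOf s j ≠ 0 → j ∈ s) ∧
      (∑ j, nuOf s j • colA A j = 0) ∧ (∃ j, j ∉ τ ∧ nuOf s j ≠ 0) := by
    intro s hs; simp only [hnuOf]; rw [dif_pos hs]; exact hs.choose_spec
  set DepSet : Finset (Finset (Fin n)) := Finset.univ.filter P with hDS
  -- generic choice of weights outside τ
  obtain ⟨v, hvbox, hvgen⟩ := exists_generic τ B DepSet nuOf
    (fun s hs => (hnu_spec s ((Finset.mem_filter.1 hs).2)).2.2) η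
  set w : Fin n → ℝ := fun j => if h : j ∈ τ then η j else v ⟨j, h⟩ with hw
  have W1 : ∀ j ∈ τ, w j = η j := fun j hj => by simp only [hw]; rw [dif_pos hj]
  have W2 : ∀ (j : Fin n) (h : j ∉ τ), B ⟨j, h⟩ < w j ∧ w j < B ⟨j, h⟩ + 1 := by
    intro j h
    simp only [hw]; rw [dif_neg h]
    exact hvbox ⟨j, h⟩
  have W3 : ∀ j, 0 < w j := by
    intro j
    by_cases h : j ∈ τ
    · rw [W1 j h]; exact hηpos j h
    · exact lt_of_le_of_lt (hB0 ⟨j, h⟩) (W2 j h).1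
  have W4 : ∀ s ∈ DepSet, ∑ j, nuOf s j * w j ≠ 0 := fun s hs => hvgen s hs
  -- persistence of old facets
  have hpersist : ∀ s : Finset (Fin n), isFacetRel A τ w₀ s →
      isFacetRel A Finset.univ w s := by
    intro s hs
    have hsη : isFacetRel A τ η s := (hηfacets s).2 hs
    obtain ⟨hceq, hclt⟩ := hcert_spec s hsη
    refine ⟨⟨Finset.subset_univ s, cert s, ?_, ?_⟩, hs.2⟩
    · intro j hj
      rw [← dotc_col, hceq j hj, W1 j (hsη.1.1 hj)]
    · intro j _ hjs
      rw [← dotc_col]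
      by_cases hjτ : j ∈ τ
      · rw [W1 j hjτ]; exact hclt j hjτ hjs
      · exact lt_of_le_of_lt
          (hBge ⟨j, hjτ⟩ s (Finset.mem_filter.2 ⟨Finset.mem_univ s, hsη⟩)) (W2 j hjτ).1
  -- simpliciality of all facets of T_w
  have hsimp : ∀ s : Finset (Fin n), isFacetRel A Finset.univ w s → s.card = d ∧
      LinearIndependent ℝ (fun j : {j // j ∈ s} => fun i => (A i j.1 : ℝ)) := by
    intro s hs
    by_cases hind : LinearIndependent ℝ (fun j : {j // j ∈ s} => colA A j)
    · constructor
      · have hspan : ⊤ ≤ Submodule.span ℝ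
            (Set.range fun j : {j // j ∈ s} => colA A j) := by
          rw [show (Set.range fun j : {j // j ∈ s} => colA A j)
            = (Set.range fun j : {j // j ∈ s} => fun i => (A i j.1 : ℝ)) from rfl, hs.2]
        have hbas := Module.Basis.mk hind hspan
        have hcard := Module.finrank_eq_card_basis hbas
        have hfr : Module.finrank ℝ (Fin d → ℝ) = d := by simp
        rw [hfr] at hcard
        rw [hcard, Fintype.card_coe]
      · exact hind
    · exfalso
      obtain ⟨g, hg0, i₀, hgi₀⟩ := Fintype.not_linearIndependent_iff.1 hind
      set ν : Fin n → ℝ := fun j => if h : j ∈ s then g ⟨j, h⟩ else 0 with hν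
      have hνsupp : ∀ j, ν j ≠ 0 → j ∈ s := by
        intro j hj
        by_contra h
        exact hj (by simp [hν, h])
      have hνrel : ∑ j, ν j • colA A j = 0 := by
        rw [← Finset.sum_subset (Finset.subset_univ s) (fun j _ hjs => by
            have h0 : ν j = 0 := by by_contra hcon; exact hjs (hνsupp j hcon)
            simp [h0]),
          ← Finset.sum_coe_sort s (fun j => ν j • colA A j), ← hg0]
        exact Finset.sum_congr rfl fun j _ => by simp only [hν]; rw [dif_pos j.2]
      have hν0 : ν i₀.1 ≠ 0 := by simpa [hν, i₀.2] using hgi₀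
      obtain ⟨⟨hsub, c, heq, hlt⟩, hspan⟩ := hs
      by_cases hτcase : ∀ j, ν j ≠ 0 → j ∈ τ
      · have hmem : memTwRel A τ η (s ∩ τ) := by
          refine ⟨Finset.inter_subset_right, c, ?_, ?_⟩
          · intro j hj
            obtain ⟨hj1, hj2⟩ := Finset.mem_inter.1 hj
            rw [heq j hj1]; exact W1 j hj2
          · intro j hjτ hjs
            have hjs' : j ∉ s := fun hjmem => hjs (Finset.mem_inter.2 ⟨hjmem, hjτ⟩)
            rw [← W1 j hjτ]
            exact hlt j (Finset.mem_univ j) hjs'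
        have hsuppint : ∀ j, ν j ≠ 0 → j ∈ s ∩ τ := fun j h =>
          Finset.mem_inter.2 ⟨hνsupp j h, hτcase j h⟩
        have hzero := cellIndep A τ η c₀ hc₀' hηreg hmem hsuppint hνrel
        exact hν0 (by rw [hzero]; rfl)
      · push_neg at hτcase
        obtain ⟨j₁, hj₁ne, hj₁τ⟩ := hτcase
        have hPs : P s := ⟨ν, hνsupp, hνrel, ⟨j₁, hj₁τ, hj₁ne⟩⟩
        have hsDep : s ∈ DepSet := Finset.mem_filter.2 ⟨Finset.mem_univ s, hPs⟩
        obtain ⟨hsupp', hrel', hex'⟩ := hnu_spec s hPs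
        have hwrel' : ∑ j, nuOf s j * w j = 0 := by
          have h1 : ∑ j, nuOf s j * w j = ∑ j, nuOf s j * dotc c (colA A j) := by
            refine Finset.sum_congr rfl fun j _ => ?_
            by_cases hj : nuOf s j = 0
            · simp [hj]
            · rw [dotc_col, heq j (hsupp' j hj)]
          rw [h1, ← dotc_sum c Finset.univ (nuOf s) (colA A), hrel']
          simp [dotc]
        exact W4 s hsDep hwrel'
  have hcover := covering_lemma A hrank w W3 (fun s hs => (hsimp s hs).2)
  exact ⟨w, ⟨hsimp, hcover⟩, hpersist⟩
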